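/- Let φ : R → S be a degree-preserving homomorphism of noetherian positively graded commutative rings. Then φ is a finite ring homomorphism (S is a finitely generated R-module) if and only if both: (a) the radical of the ideal generated by φ(R_+) contains S_+ (where R_+, S_+ are the ideals of positive-degree elements), and (b) the degree-0 map φ_0 : R_0 → S_0 is finite. -/

import Mathlib

section Aux


section Aux

variable {R S : Type*} [CommRing R] [CommRing S]

lemma aux_proj_mul (𝒮 : ℤ → AddSubgroup S) [GradedRing 𝒮] {x : S} {e : ℤ}
    (hx : x ∈ 𝒮 e) (a : S) (d : ℤ) :
    (DirectSum.decompose 𝒮 (a * x) d : S) =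
      (DirectSum.decompose 𝒮 a (d - e) : S) * x := by
  lift x to 𝒮 e using hx
  rw [DirectSum.decompose_mul, DirectSum.decompose_coe]
  have := DirectSum.coe_mul_of_apply_add (A := fun i => 𝒮 i)
    (DirectSum.decompose 𝒮 a) x (d - e)
  rwa [sub_add_cancel] at this

lemma aux_decompose_map (ℛ : ℤ → AddSubgroup R) (𝒮 : ℤ → AddSubgroup S)
    [GradedRing ℛ] [GradedRing 𝒮] (φ : R →+* S)
    (hφ : ∀ d : ℤ, ∀ r ∈ ℛ d, φ r ∈ 𝒮 d) (c : R) (j : ℤ) :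
    (DirectSum.decompose 𝒮 (φ c) j : S) = φ (DirectSum.decompose ℛ c j) := by
  induction c using DirectSum.Decomposition.inductionOn ℛ with
  | zero => simp
  | @homogeneous i m =>
      obtain ⟨m, hm⟩ := m
      have hm' : φ m ∈ 𝒮 i := hφ i m hm
      by_cases h : i = j
      · subst h
        rw [DirectSum.decompose_of_mem_same 𝒮 hm',
          DirectSum.decompose_of_mem_same ℛ hm]
      · rw [DirectSum.decompose_of_mem_ne 𝒮 hm' h,
          DirectSum.decompose_of_mem_ne ℛ hm h, map_zero]
  | add a b ha hb =>
      simp only [map_add, DirectSum.decompose_add, DirectSum.add_apply,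
        AddSubgroup.coe_add, ha, hb]

lemma aux_repr (𝒮 : ℤ → AddSubgroup S) [GradedRing 𝒮] (t : Finset S) (e : S → ℤ)
    (he : ∀ x ∈ t, x ∈ 𝒮 (e x)) {d : ℤ} {s : S} (hs : s ∈ 𝒮 d)
    (hmem : s ∈ Ideal.span (↑t : Set S)) :
    ∃ b : S → S, (∀ x, b x ∈ 𝒮 (d - e x)) ∧ s = ∑ x ∈ t, b x * x := by
  obtain ⟨f, -, hf⟩ := Submodule.mem_span_finset.mp hmem
  refine ⟨fun x => (DirectSum.decompose 𝒮 (f x) (d - e x) : S),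
    fun x => SetLike.coe_mem _, ?_⟩
  have h1 : s = (DirectSum.decompose 𝒮 (∑ x ∈ t, f x • x) d : S) := by
    rw [hf, DirectSum.decompose_of_mem_same 𝒮 hs]
  rw [h1]
  have h2 : (DirectSum.decompose 𝒮 (∑ x ∈ t, f x • x) d : S) =
      ∑ x ∈ t, (DirectSum.decompose 𝒮 (f x • x) d : S) := by
    rw [DirectSum.decompose_sum, DFinsupp.finset_sum_apply]
    push_cast
    rfl
  rw [h2]
  refine Finset.sum_congr rfl fun x hx => ?_
  rw [smul_eq_mul, aux_proj_mul 𝒮 (he x hx) (f x) d]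

lemma aux_fin_homog_gens (𝒮 : ℤ → AddSubgroup S) [GradedRing 𝒮] [IsNoetherianRing S] :
    ∃ t : Finset S, (∀ x ∈ t, ∃ d : ℤ, 0 < d ∧ x ∈ 𝒮 d) ∧
      Ideal.span ↑t = Ideal.span {s : S | ∃ d : ℤ, 0 < d ∧ s ∈ 𝒮 d} := by
  classical
  set G : Set S := {s : S | ∃ d : ℤ, 0 < d ∧ s ∈ 𝒮 d} with hG
  have hfg : (Ideal.span G).FG := IsNoetherian.noetherian _
  have hc := (Submodule.fg_iff_compact _).mp hfg
  have hle : Ideal.span G ≤ ⨆ x : G, Ideal.span {(x : S)} := by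
    refine Ideal.span_le.mpr fun x hx => ?_
    exact Submodule.mem_iSup_of_mem ⟨x, hx⟩ (Submodule.mem_span_singleton_self x)
  obtain ⟨fs, hfs⟩ :=
    CompleteLattice.IsCompactElement.exists_finset_of_le_iSup _ hc (fun x : G => Ideal.span {(x : S)}) hle
  refine ⟨fs.image (fun x => x.1), ?_, ?_⟩
  · intro x hx
    simp only [Finset.mem_image] at hx
    obtain ⟨y, _, rfl⟩ := hx
    exact y.2
  · refine le_antisymm ?_ ?_
    · rw [Ideal.span_le]
      intro x hx
      simp only [Finset.coe_image, Set.mem_image] at hx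
      obtain ⟨y, _, rfl⟩ := hx
      exact Ideal.subset_span y.2
    · refine le_trans hfs ?_
      refine iSup₂_le fun i hi => ?_
      rw [Ideal.span_le, Set.singleton_subset_iff]
      exact Ideal.subset_span (Finset.mem_coe.mpr (Finset.mem_image.mpr ⟨i, hi, rfl⟩))

lemma aux_decompose_finset_sum {α : Type*} (𝒮 : ℤ → AddSubgroup S) [GradedRing 𝒮]
    (t : Finset α) (g : α → S) (d : ℤ) :
    (DirectSum.decompose 𝒮 (∑ x ∈ t, g x) d : S) =
      ∑ x ∈ t, (DirectSum.decompose 𝒮 (g x) d : S) := by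
  rw [DirectSum.decompose_sum, DFinsupp.finset_sum_apply]
  push_cast
  rfl

lemma aux_forward (ℛ : ℤ → AddSubgroup R) (𝒮 : ℤ → AddSubgroup S)
    [GradedRing ℛ] [GradedRing 𝒮]
    (hRpos : ∀ d : ℤ, d < 0 → ∀ r ∈ ℛ d, r = (0 : R))
    (hSpos : ∀ d : ℤ, d < 0 → ∀ s ∈ 𝒮 d, s = (0 : S))
    (φ : R →+* S) (hφ : ∀ d : ℤ, ∀ r ∈ ℛ d, φ r ∈ 𝒮 d)
    [Algebra R S] (halg : algebraMap R S = φ) (hfin : Module.Finite R S) :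
    ((∀ s : S, (∃ d : ℤ, 0 < d ∧ s ∈ 𝒮 d) →
        s ∈ (Ideal.span (⇑φ '' {r : R | ∃ d : ℤ, 0 < d ∧ r ∈ ℛ d})).radical) ∧
     (∃ t : Finset S, ↑t ⊆ (𝒮 0 : Set S) ∧ ∀ s ∈ 𝒮 0,
        s ∈ AddSubgroup.closure {y : S | ∃ r ∈ ℛ 0, ∃ x ∈ t, y = φ r * x})) := by
  classical
  obtain ⟨u, hu⟩ := Module.finite_def.mp hfin
  set T : Finset S := u.biUnion (fun y => (DirectSum.decompose 𝒮 y).support.image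
    (fun j => ((DirectSum.decompose 𝒮 y j : S)))) with hT
  have hThom : ∀ x ∈ T, ∃ j : ℤ, x ∈ 𝒮 j := by
    intro x hx
    simp only [hT, Finset.mem_biUnion, Finset.mem_image] at hx
    obtain ⟨y, -, j, -, rfl⟩ := hx
    exact ⟨j, SetLike.coe_mem _⟩
  have hTspan : Submodule.span R (↑T : Set S) = ⊤ := by
    rw [eq_top_iff, ← hu]
    refine Submodule.span_le.mpr fun y hy => ?_
    rw [← DirectSum.sum_support_decompose 𝒮 y]
    refine sum_mem fun j hj => Submodule.subset_span ?_
    exact Finset.mem_biUnion.mpr ⟨y, hy, Finset.mem_image.mpr ⟨j, hj, rfl⟩⟩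
  set e : S → ℤ := fun x => if h : ∃ j : ℤ, x ∈ 𝒮 j then h.choose else 0 with he'
  have he : ∀ x ∈ T, x ∈ 𝒮 (e x) := by
    intro x hx
    have h := hThom x hx
    simp only [he', dif_pos h]
    exact h.choose_spec
  set D : ℤ := T.fold max 0 e with hD'
  have hD : ∀ x ∈ T, e x ≤ D := fun x hx => (Finset.le_fold_max _).mpr (Or.inr ⟨x, hx, le_rfl⟩)
  have hD0 : 0 ≤ D := (Finset.le_fold_max _).mpr (Or.inl le_rfl)
  have rep : ∀ (d : ℤ) (y : S), y ∈ 𝒮 d → ∃ f : S → R,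
      y = ∑ x ∈ T, φ ((DirectSum.decompose ℛ (f x) (d - e x) : R)) * x := by
    intro d y hy
    have hyT : y ∈ Submodule.span R (↑T : Set S) := hTspan ▸ Submodule.mem_top
    obtain ⟨f, -, hf⟩ := Submodule.mem_span_finset.mp hyT
    refine ⟨f, ?_⟩
    have h1 : y = (DirectSum.decompose 𝒮 (∑ x ∈ T, f x • x) d : S) := by
      rw [hf, DirectSum.decompose_of_mem_same 𝒮 hy]
    rw [h1, aux_decompose_finset_sum]
    refine Finset.sum_congr rfl fun x hx => ?_
    rw [Algebra.smul_def, halg, aux_proj_mul 𝒮 (he x hx) _ d,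
      aux_decompose_map ℛ 𝒮 φ hφ]
  constructor
  · rintro s ⟨d, hd, hs⟩
    set I := Ideal.span (⇑φ '' {r : R | ∃ d : ℤ, 0 < d ∧ r ∈ ℛ d}) with hI
    have hpos : ∀ d' : ℤ, D < d' → ∀ y ∈ 𝒮 d', y ∈ I := by
      intro d' hd' y hy
      obtain ⟨f, hf⟩ := rep d' y hy
      rw [hf]
      refine Ideal.sum_mem _ fun x hx => ?_
      refine Ideal.mul_mem_right _ _ (Ideal.subset_span ?_)
      exact ⟨_, ⟨d' - e x, by have := hD x hx; omega, SetLike.coe_mem _⟩, rfl⟩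
    set n : ℕ := D.toNat + 1 with hn
    have hsn : s ^ n ∈ 𝒮 ((n : ℤ) * d) := by
      have := SetLike.pow_mem_graded n hs
      rwa [nsmul_eq_mul] at this
    refine ⟨n, hpos _ ?_ _ hsn⟩
    have h1 : (n : ℤ) ≤ (n : ℤ) * d := le_mul_of_one_le_right (by positivity) hd
    have h2 : D < (n : ℤ) := by
      have := Int.self_le_toNat D
      omega
    omega
  · refine ⟨T.filter (fun x => x ∈ 𝒮 0), fun x hx => (Finset.mem_filter.mp hx).2, ?_⟩
    intro s hs
    obtain ⟨f, hf⟩ := rep 0 s hs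
    rw [hf]
    refine sum_mem fun x hx => ?_
    rcases lt_trichotomy (e x) 0 with h | h | h
    · rw [hSpos _ h _ (he x hx), mul_zero]
      exact zero_mem _
    · refine AddSubgroup.subset_closure ?_
      refine ⟨(DirectSum.decompose ℛ (f x) (0 - e x) : R), ?_,
        x, Finset.mem_filter.mpr ⟨hx, h ▸ he x hx⟩, rfl⟩
      rw [h, sub_zero]
      exact SetLike.coe_mem _
    · rw [hRpos _ (by omega) _ (SetLike.coe_mem _), map_zero, zero_mul]
      exact zero_mem _

variable [DecidableEq S]

/-- products of at most `k` elements of `t`. -/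
def mulW (t : Finset S) : ℕ → Finset S
  | 0 => {1}
  | (k+1) => mulW t k ∪ Finset.image₂ (· * ·) t (mulW t k)

lemma one_mem_mulW (t : Finset S) (k : ℕ) : (1 : S) ∈ mulW t k := by
  induction k with
  | zero => simp [mulW]
  | succ k ih => exact Finset.mem_union_left _ ih

lemma mulW_mono (t : Finset S) (k : ℕ) : mulW t k ⊆ mulW t (k+1) :=
  Finset.subset_union_left

lemma mul_mem_mulW (t : Finset S) (k : ℕ) {g x : S} (hg : g ∈ t) (hx : x ∈ mulW t k) :
    g * x ∈ mulW t (k+1) :=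
  Finset.mem_union_right _ (Finset.mem_image₂.mpr ⟨g, hg, x, hx, rfl⟩)

end Aux

section Bwd
variable {R S : Type*} [CommRing R] [CommRing S]

lemma aux_backward (ℛ : ℤ → AddSubgroup R) (𝒮 : ℤ → AddSubgroup S)
    [GradedRing ℛ] [GradedRing 𝒮] [IsNoetherianRing S]
    (hSpos : ∀ d : ℤ, d < 0 → ∀ s ∈ 𝒮 d, s = (0 : S))
    (φ : R →+* S) (hφ : ∀ d : ℤ, ∀ r ∈ ℛ d, φ r ∈ 𝒮 d)
    [Algebra R S] (halg : algebraMap R S = φ)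
    (h_a : ∀ s : S, (∃ d : ℤ, 0 < d ∧ s ∈ 𝒮 d) →
        s ∈ (Ideal.span (⇑φ '' {r : R | ∃ d : ℤ, 0 < d ∧ r ∈ ℛ d})).radical)
    (h_b : ∃ t : Finset S, ↑t ⊆ (𝒮 0 : Set S) ∧ ∀ s ∈ 𝒮 0,
        s ∈ AddSubgroup.closure {y : S | ∃ r ∈ ℛ 0, ∃ x ∈ t, y = φ r * x}) :
    Module.Finite R S := by
  classical
  obtain ⟨t₀, ht₀sub, ht₀gen⟩ := h_b
  set Gr : Set R := {r : R | ∃ d : ℤ, 0 < d ∧ r ∈ ℛ d} with hGr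
  set I : Ideal S := Ideal.span (⇑φ '' Gr) with hI
  set GS : Set S := {s : S | ∃ d : ℤ, 0 < d ∧ s ∈ 𝒮 d} with hGS
  have hrad : Ideal.span GS ≤ I.radical := Ideal.span_le.mpr fun s hs => h_a s hs
  obtain ⟨N, hN⟩ := Ideal.exists_pow_le_of_le_radical_of_fg hrad (IsNoetherian.noetherian _)
  obtain ⟨t, htHom, htSpan⟩ := aux_fin_homog_gens 𝒮
  obtain ⟨e, he⟩ : ∃ e : S → ℤ, ∀ x : S, (∃ d : ℤ, 0 < d ∧ x ∈ 𝒮 d) →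
      0 < e x ∧ x ∈ 𝒮 (e x) :=
    ⟨fun x => if h : ∃ d : ℤ, 0 < d ∧ x ∈ 𝒮 d then h.choose else 0,
      fun x h => by dsimp only; rw [dif_pos h]; exact ⟨h.choose_spec.1, h.choose_spec.2⟩⟩
  set D : ℤ := t.fold max 1 e with hD'
  have hD : ∀ x ∈ t, e x ≤ D := fun x hx => (Finset.le_fold_max _).mpr (Or.inr ⟨x, hx, le_rfl⟩)
  have hD1 : 1 ≤ D := (Finset.le_fold_max _).mpr (Or.inl le_rfl)
  -- high-degree elements lie in high powers of the irrelevant ideal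
  have Q : ∀ (k : ℕ) (d : ℤ), (k : ℤ) * D ≤ d → ∀ s ∈ 𝒮 d, s ∈ Ideal.span GS ^ k := by
    intro k
    induction k with
    | zero => intro d _ s _; rw [pow_zero, Ideal.one_eq_top]; trivial
    | succ k ih =>
      intro d hd s hs
      push_cast at hd
      have hd1 : 0 < d := by nlinarith
      have hspan : s ∈ Ideal.span (↑t : Set S) := by
        have : s ∈ Ideal.span GS := Ideal.subset_span ⟨d, hd1, hs⟩
        rwa [← htSpan] at this
      obtain ⟨b, hb, hrep⟩ := aux_repr 𝒮 t e (fun x hx => (he x (htHom x hx)).2) hs hspan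
      rw [hrep]
      refine Submodule.sum_mem _ fun x hx => ?_
      have hbk : b x ∈ Ideal.span GS ^ k := by
        refine ih (d - e x) ?_ _ (hb x)
        have := hD x hx
        linarith
      have hxmem : x ∈ Ideal.span GS := by
        have : x ∈ Ideal.span (↑t : Set S) := Ideal.subset_span (Finset.mem_coe.mpr hx)
        rwa [htSpan] at this
      rw [pow_succ]
      exact Ideal.mul_mem_mul hbk hxmem
  -- low-degree elements lie in the span of the finite set t₀ * mulW t k
  have hbase : ∀ (k : ℕ) (d : ℤ), d ≤ (k : ℤ) → ∀ s ∈ 𝒮 d,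
      s ∈ Submodule.span R (↑(Finset.image₂ (· * ·) t₀ (mulW t k)) : Set S) := by
    intro k
    induction k with
    | zero =>
      intro d hd s hs
      rcases lt_or_eq_of_le hd with h | h
      · rw [hSpos d h s hs]; exact zero_mem _
      · subst h
        have hcl := ht₀gen s hs
        have hle : AddSubgroup.closure {y : S | ∃ r ∈ ℛ 0, ∃ x ∈ t₀, y = φ r * x} ≤
            (Submodule.span R (↑(Finset.image₂ (· * ·) t₀ (mulW t 0)) : Set S)).toAddSubgroup := by
          refine AddSubgroup.closure_le _ |>.mpr ?_
          rintro y ⟨r, -, x, hx, rfl⟩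
          have hx1 : x * 1 ∈ Finset.image₂ (· * ·) t₀ (mulW t 0) :=
            Finset.mem_image₂.mpr ⟨x, hx, 1, one_mem_mulW t 0, rfl⟩
          have : φ r * x = r • (x * 1) := by
            rw [mul_one, Algebra.smul_def, halg]
          rw [this]
          exact Submodule.smul_mem _ _ (Submodule.subset_span (Finset.mem_coe.mpr hx1))
        exact hle hcl
    | succ k ih =>
      intro d hd s hs
      by_cases hdk : d ≤ (k : ℤ)
      · refine Submodule.span_mono ?_ (ih d hdk s hs)
        exact_mod_cast Finset.image₂_subset Finset.Subset.rfl (mulW_mono t k)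
      · push_cast at hd
        have hdpos : 0 < d := by omega
        have hspan : s ∈ Ideal.span (↑t : Set S) := by
          have : s ∈ Ideal.span GS := Ideal.subset_span ⟨d, hdpos, hs⟩
          rwa [← htSpan] at this
        obtain ⟨b, hb, hrep⟩ := aux_repr 𝒮 t e (fun x hx => (he x (htHom x hx)).2) hs hspan
        rw [hrep]
        refine Submodule.sum_mem _ fun x hx => ?_
        have hbx : b x ∈ Submodule.span R (↑(Finset.image₂ (· * ·) t₀ (mulW t k)) : Set S) := by
          refine ih (d - e x) ?_ _ (hb x)
          have := (he x (htHom x hx)).1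
          omega
        have hmap : Submodule.span R (↑(Finset.image₂ (· * ·) t₀ (mulW t k)) : Set S) ≤
            (Submodule.span R (↑(Finset.image₂ (· * ·) t₀ (mulW t (k+1))) : Set S)).comap
              (LinearMap.mulRight R x) := by
          refine Submodule.span_le.mpr fun z hz => ?_
          obtain ⟨a, ha, w, hw, rfl⟩ := Finset.mem_image₂.mp (Finset.mem_coe.mp hz)
          have heq : (a * w) * x = a * (x * w) := by ring
          refine SetLike.mem_coe.mpr (Submodule.mem_comap.mpr ?_)
          rw [LinearMap.mulRight_apply, heq]
          exact Submodule.subset_span (Finset.mem_coe.mpr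
            (Finset.mem_image₂.mpr ⟨a, ha, x * w, mul_mem_mulW t k hx hw, rfl⟩))
        exact hmap hbx
  -- the main induction
  set B : ℕ := ((N : ℤ) * D).toNat with hB
  set P : Submodule R S :=
    Submodule.span R (↑(Finset.image₂ (· * ·) t₀ (mulW t B)) : Set S) with hP
  have main : ∀ (n : ℕ) (d : ℤ), d ≤ (n : ℤ) → ∀ s ∈ 𝒮 d, s ∈ P := by
    intro n
    induction n with
    | zero =>
      intro d hd s hs
      exact hbase B d (le_trans hd (by positivity)) s hs
    | succ n ih =>
      intro d hd s hs
      by_cases hdB : d ≤ (B : ℤ)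
      · exact hbase B d hdB s hs
      · have hNd : (N : ℤ) * D ≤ d := by
          have h1 : (N : ℤ) * D ≤ ((((N : ℤ) * D).toNat : ℕ) : ℤ) := Int.self_le_toNat _
          omega
        have hsI : s ∈ I := hN (Q N d hNd s hs)
        rw [hI] at hsI
        obtain ⟨c, hcsupp, hcsum⟩ := Submodule.mem_span_set.mp hsI
        have ht'hom : ∀ x ∈ c.support, ∃ d' : ℤ, 0 < d' ∧ x ∈ 𝒮 d' := by
          intro x hx
          obtain ⟨r, ⟨dr, hdr, hr⟩, rfl⟩ := hcsupp hx
          exact ⟨dr, hdr, hφ dr r hr⟩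
        have hst' : s ∈ Ideal.span (↑c.support : Set S) := by
          rw [← hcsum, Finsupp.sum]
          exact Submodule.sum_mem _ fun x hx =>
            Submodule.smul_mem _ _ (Ideal.subset_span (Finset.mem_coe.mpr hx))
        obtain ⟨b, hb, hrep⟩ :=
          aux_repr 𝒮 c.support e (fun x hx => (he x (ht'hom x hx)).2) hs hst'
        rw [hrep]
        refine Submodule.sum_mem _ fun x hx => ?_
        have hbx : b x ∈ P := by
          refine ih (d - e x) ?_ _ (hb x)
          have := (he x (ht'hom x hx)).1
          push_cast at hd ⊢
          omega
        obtain ⟨r, -, rfl⟩ := hcsupp hx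
        have heq : b (φ r) * φ r = r • b (φ r) := by
          rw [Algebra.smul_def, halg, mul_comm]
        rw [heq]
        exact Submodule.smul_mem _ _ hbx
  refine Module.finite_def.mpr ⟨Finset.image₂ (· * ·) t₀ (mulW t B), ?_⟩
  rw [eq_top_iff]
  intro s _
  rw [← DirectSum.sum_support_decompose 𝒮 s]
  refine Submodule.sum_mem _ fun j _ => ?_
  exact main j.toNat j (Int.self_le_toNat j) _ (SetLike.coe_mem _)

end Bwd

/-- Let `φ : R → S` be a degree-preserving homomorphism of noetherian
positively graded commutative rings.  Then `φ` is finite iff (a) `S₊` is contained in the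
radical of the ideal generated by `φ(R₊)`, and (b) `φ₀ : R₀ → S₀` is finite (i.e. `S₀` is
a finitely generated `R₀`-module via `φ`). -/
theorem stmt_18 {R S : Type*} [CommRing R] [CommRing S]
    [IsNoetherianRing R] [IsNoetherianRing S]
    (ℛ : ℤ → AddSubgroup R) (𝒮 : ℤ → AddSubgroup S) [GradedRing ℛ] [GradedRing 𝒮]
    (hRpos : ∀ d : ℤ, d < 0 → ∀ r ∈ ℛ d, r = (0 : R))
    (hSpos : ∀ d : ℤ, d < 0 → ∀ s ∈ 𝒮 d, s = (0 : S))
    (φ : R →+* S) (hφ : ∀ d : ℤ, ∀ r ∈ ℛ d, φ r ∈ 𝒮 d) :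
    φ.Finite ↔
      ((∀ s : S, (∃ d : ℤ, 0 < d ∧ s ∈ 𝒮 d) →
          s ∈ (Ideal.span (⇑φ '' {r : R | ∃ d : ℤ, 0 < d ∧ r ∈ ℛ d})).radical) ∧
       (∃ t : Finset S, ↑t ⊆ (𝒮 0 : Set S) ∧ ∀ s ∈ 𝒮 0,
          s ∈ AddSubgroup.closure {y : S | ∃ r ∈ ℛ 0, ∃ x ∈ t, y = φ r * x})) := by
  classical
  letI : Algebra R S := φ.toAlgebra
  have halg : algebraMap R S = φ := rfl
  constructor
  · intro hfin
    exact aux_forward ℛ 𝒮 hRpos hSpos φ hφ halg hfin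
  · rintro ⟨ha, hb⟩
    exact aux_backward ℛ 𝒮 hSpos φ hφ halg ha hb
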